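/- (Equation (3.6).) Under the stated hypotheses, for each α ∈ (0,1] the bounded continuous function a_t = ⟨g_α, P_t^{(α)} f_α⟩ satisfies the Volterra convolution equation ∫_0^t a_s ds = Φ_t(g_α, f_α) + iλ ∫_0^t Φ_{t−s}(g_α, g_α)·a_s ds for all t ≥ 0, where Φ_t(g, f) = ∫_0^t ⟨g, e_s·f⟩ ds. -/

import Mathlib

open MeasureTheory Complex Filter

private lemma memLp_scaled {u : ℝ → ℂ} (hu : MemLp u 2 (volume : Measure ℝ))
    {α : ℝ} (hα : 0 < α) : MemLp (fun x => u (α * x)) 2 (volume : Measure ℝ) := by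
  have hmap : Measure.map (fun x : ℝ => α * x) volume
      = ENNReal.ofReal |α⁻¹| • volume := Real.map_volume_mul_left hα.ne'
  have haesm : AEStronglyMeasurable u (Measure.map (fun x : ℝ => α * x) volume) := by
    rw [hmap]; exact hu.1.mono_ac Measure.smul_absolutelyContinuous
  have h1 : MemLp u 2 (Measure.map (fun x : ℝ => α * x) volume) := by
    rw [hmap]; exact hu.smul_measure ENNReal.ofReal_ne_top
  exact (memLp_map_measure_iff haesm (measurable_const_mul α).aemeasurable).mp h1

private lemma integrable_conj_mul {u w : ℝ → ℂ} (hu : MemLp u 2 (volume : Measure ℝ))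
    (hw : MemLp w 2 (volume : Measure ℝ)) :
    Integrable (fun x => (starRingEnd ℂ) (u x) * w x) volume := by
  have h := L2.integrable_inner (𝕜 := ℂ) (hu.toLp u) (hw.toLp w)
  refine h.congr ?_
  filter_upwards [hu.coeFn_toLp, hw.coeFn_toLp] with x h1 h2
  rw [RCLike.inner_apply, h1, h2, mul_comm]

private lemma norm_exp_I_mul (x : ℝ) (z : ℂ) (hz : z.im = 0) :
    ‖Complex.exp (Complex.I * x * z)‖ = 1 := by
  rw [Complex.norm_exp]
  simp [Complex.mul_re, Complex.mul_im, hz]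

private lemma memLp_exp_mul {w : ℝ → ℂ} (hw : MemLp w 2 (volume : Measure ℝ)) (u : ℝ) :
    MemLp (fun x : ℝ => Complex.exp (Complex.I * x * u) * w x) 2 (volume : Measure ℝ) := by
  refine hw.of_le (AEStronglyMeasurable.mul ?_ hw.1) ?_
  · exact (Complex.continuous_exp.comp (by continuity)).aestronglyMeasurable
  · refine Filter.Eventually.of_forall fun x => ?_
    rw [norm_mul, norm_exp_I_mul x u (by simp), one_mul]

set_option maxHeartbeats 1000000 in
/-- Equation (3.6): for each `α ∈ (0,1]` the function `a_t = ⟨g_α, P_t^{(α)} f_α⟩`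
satisfies the Volterra convolution equation
`∫_0^t a_s ds = Φ_t(g_α,f_α) + iλ ∫_0^t Φ_{t-s}(g_α,g_α) a_s ds`,
where `Φ_t(g,f) = ∫_0^t ⟨g, e_s f⟩ ds`. -/
theorem duhamel_volterra_equation (lam : ℝ) (f g : ℝ → ℂ)
    (hf2 : MemLp f 2 (volume : Measure ℝ)) (hg2 : MemLp g 2 (volume : Measure ℝ))
    (P : ℝ → ℝ → (Lp ℂ 2 (volume : Measure ℝ) ≃ₗᵢ[ℂ] Lp ℂ 2 (volume : Measure ℝ)))
    (hP0 : ∀ α ∈ Set.Ioc (0:ℝ) 1, ∀ v : Lp ℂ 2 (volume : Measure ℝ), P α 0 v = v)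
    (hPcont : ∀ α ∈ Set.Ioc (0:ℝ) 1, ∀ v : Lp ℂ 2 (volume : Measure ℝ),
      ContinuousOn (fun t : ℝ => P α t v) (Set.Ici 0))
    (hDuh : ∀ α ∈ Set.Ioc (0:ℝ) 1, ∀ v : Lp ℂ 2 (volume : Measure ℝ), ∀ t : ℝ, 0 ≤ t →
      (P α t v : ℝ → ℂ) =ᵐ[volume] fun ω =>
        Complex.exp (Complex.I * ω * t) * (v : ℝ → ℂ) ω +
          Complex.I * lam * ∫ s in (0:ℝ)..t,
            Complex.exp (Complex.I * ω * (t - s)) * g (α * ω) *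
              ∫ x : ℝ, (starRingEnd ℂ) (g (α * x)) * (P α s v : ℝ → ℂ) x)
    (fLp : ℝ → Lp ℂ 2 (volume : Measure ℝ))
    (hfLp : ∀ α ∈ Set.Ioc (0:ℝ) 1, (fLp α : ℝ → ℂ) =ᵐ[volume] fun ω => f (α * ω)) :
    ∀ α ∈ Set.Ioc (0:ℝ) 1, ∀ t : ℝ, 0 ≤ t →
      (∫ s in (0:ℝ)..t, ∫ x : ℝ,
          (starRingEnd ℂ) (g (α * x)) * (P α s (fLp α) : ℝ → ℂ) x) =
        (∫ s in (0:ℝ)..t, ∫ x : ℝ,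
            (starRingEnd ℂ) (g (α * x)) * (Complex.exp (Complex.I * x * s) * f (α * x))) +
          Complex.I * lam * ∫ s in (0:ℝ)..t,
            (∫ r in (0:ℝ)..(t - s), ∫ x : ℝ,
              (starRingEnd ℂ) (g (α * x)) * (Complex.exp (Complex.I * x * r) * g (α * x))) *
              ∫ x : ℝ, (starRingEnd ℂ) (g (α * x)) * (P α s (fLp α) : ℝ → ℂ) x := by
  intro α hα t ht
  obtain ⟨hα0, hα1⟩ := hα
  have hG2 : MemLp (fun x : ℝ => g (α * x)) 2 (volume : Measure ℝ) := memLp_scaled hg2 hα0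
  have hF2 : MemLp (fun x : ℝ => f (α * x)) 2 (volume : Measure ℝ) := memLp_scaled hf2 hα0
  have hFLp : MemLp ((fLp α : ℝ → ℂ)) 2 (volume : Measure ℝ) := Lp.memLp _
  set a : ℝ → ℂ := fun s => ∫ x : ℝ, (starRingEnd ℂ) (g (α * x)) * (P α s (fLp α) : ℝ → ℂ) x
    with haDef
  set b : ℝ → ℂ := fun s => ∫ x : ℝ,
      (starRingEnd ℂ) (g (α * x)) * (Complex.exp (Complex.I * x * s) * f (α * x)) with hbDef
  set φ : ℝ → ℂ := fun u => ∫ x : ℝ,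
      (starRingEnd ℂ) (g (α * x)) * (Complex.exp (Complex.I * x * u) * g (α * x)) with hφDef
  set Gl : Lp ℂ 2 (volume : Measure ℝ) := hG2.toLp _ with hGLdef
  have ha_inner : ∀ s : ℝ, a s = @inner ℂ _ _ Gl (P α s (fLp α)) := by
    intro s
    simp only [haDef]
    rw [L2.inner_def]
    refine (integral_congr_ae ?_).symm
    filter_upwards [hG2.coeFn_toLp] with x hx
    rw [RCLike.inner_apply, hx, mul_comm]
  have haCont : ContinuousOn a (Set.Ici 0) := by
    have h1 : ContinuousOn (fun s : ℝ => (@inner ℂ _ _ Gl (P α s (fLp α)) : ℂ)) (Set.Ici 0) :=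
      (innerSL ℂ Gl).continuous.comp_continuousOn (hPcont α ⟨hα0, hα1⟩ (fLp α))
    exact h1.congr fun s _ => ha_inner s
  have haBdd : ∀ s : ℝ, ‖a s‖ ≤ ‖Gl‖ * ‖fLp α‖ := by
    intro s
    rw [ha_inner s]
    calc ‖(@inner ℂ _ _ Gl (P α s (fLp α)) : ℂ)‖ ≤ ‖Gl‖ * ‖P α s (fLp α)‖ :=
        norm_inner_le_norm _ _
      _ = ‖Gl‖ * ‖fLp α‖ := by rw [(P α s).norm_map]
  set C : ℝ := ‖Gl‖ * ‖fLp α‖ with hCdef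
  have haMeas : AEStronglyMeasurable a (volume.restrict (Set.Ici 0)) :=
    haCont.aestronglyMeasurable measurableSet_Ici
  have hbIntg : ∀ s : ℝ, Integrable (fun x : ℝ =>
      (starRingEnd ℂ) (g (α * x)) * (Complex.exp (Complex.I * x * s) * f (α * x))) volume :=
    fun s => integrable_conj_mul hG2 (memLp_exp_mul hF2 s)
  have hφIntg : ∀ u : ℝ, Integrable (fun x : ℝ =>
      (starRingEnd ℂ) (g (α * x)) * (Complex.exp (Complex.I * x * u) * g (α * x))) volume :=
    fun u => integrable_conj_mul hG2 (memLp_exp_mul hG2 u)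
  have hGG : Integrable (fun x : ℝ => (starRingEnd ℂ) (g (α * x)) * g (α * x)) volume :=
    integrable_conj_mul hG2 hG2
  set M : ℝ := ∫ x : ℝ, ‖(starRingEnd ℂ) (g (α * x)) * g (α * x)‖ with hMdef
  have hnorm3 : ∀ (w : ℝ → ℂ) (u x : ℝ),
      ‖(starRingEnd ℂ) (g (α * x)) * (Complex.exp (Complex.I * x * u) * w x)‖
        = ‖(starRingEnd ℂ) (g (α * x)) * w x‖ := by
    intro w u x
    rw [norm_mul, norm_mul, norm_exp_I_mul x u (by simp), one_mul, norm_mul]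
  have hφBdd : ∀ u : ℝ, ‖φ u‖ ≤ M := by
    intro u
    simp only [hφDef]
    refine (norm_integral_le_integral_norm _).trans ?_
    rw [hMdef]
    exact le_of_eq (integral_congr_ae (Filter.Eventually.of_forall fun x => hnorm3 (fun y => g (α * y)) u x))
  have hMnn : 0 ≤ M := le_trans (norm_nonneg _) (hφBdd 0)
  have hCnn : 0 ≤ C := le_trans (norm_nonneg _) (haBdd 0)
  have hφCont : Continuous φ := by
    simp only [hφDef]
    refine continuous_of_dominated (fun u => (hφIntg u).1)
      (fun u => Filter.Eventually.of_forall fun x => le_of_eq (hnorm3 (fun y => g (α * y)) u x)) hGG.norm ?_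
    refine Filter.Eventually.of_forall fun x => ?_
    exact continuous_const.mul
      ((Complex.continuous_exp.comp (continuous_const.mul Complex.continuous_ofReal)).mul
        continuous_const)
  have hbCont : Continuous b := by
    simp only [hbDef]
    refine continuous_of_dominated (fun s => (hbIntg s).1)
      (fun s => Filter.Eventually.of_forall fun x => le_of_eq (hnorm3 (fun y => f (α * y)) s x))
      (integrable_conj_mul hG2 hF2).norm ?_
    refine Filter.Eventually.of_forall fun x => ?_
    exact continuous_const.mul
      ((Complex.continuous_exp.comp (continuous_const.mul Complex.continuous_ofReal)).mul
        continuous_const)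
  -- the key pointwise-in-time identity
  have key : ∀ s : ℝ, 0 ≤ s →
      a s = b s + Complex.I * lam * ∫ r in (0:ℝ)..s, φ (s - r) * a r := by
    intro s hs
    have hduh := hDuh α ⟨hα0, hα1⟩ (fLp α) s hs
    set c : ℝ → ℂ := fun x : ℝ =>
      ∫ r in Set.Ioc (0:ℝ) s, Complex.exp (Complex.I * x * (s - r)) * a r with hcDef
    have haR : AEStronglyMeasurable a (volume.restrict (Set.Ioc (0:ℝ) s)) :=
      haMeas.mono_measure (Measure.restrict_mono (Set.Ioc_subset_Icc_self.trans Set.Icc_subset_Ici_self) le_rfl)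
    have hcCont : Continuous c := by
      simp only [hcDef]
      refine continuous_of_dominated
        (F := fun (x r : ℝ) => Complex.exp (Complex.I * x * (s - r)) * a r)
        (bound := fun _ => C) ?_ ?_ ?_ ?_
      · intro x
        refine AEStronglyMeasurable.mul ?_ haR
        exact (Complex.continuous_exp.comp
          (continuous_const.mul (continuous_const.sub Complex.continuous_ofReal))).aestronglyMeasurable
      · intro x
        refine Filter.Eventually.of_forall fun r => ?_
        rw [norm_mul, norm_exp_I_mul x ((s : ℂ) - (r : ℂ)) (by simp), one_mul]
        exact haBdd r
      · exact (integrableOn_const_iff).mpr (Or.inr measure_Ioc_lt_top)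
      · refine Filter.Eventually.of_forall fun r => ?_
        exact ((Complex.continuous_exp.comp
          ((continuous_const.mul Complex.continuous_ofReal).mul continuous_const)).mul
            continuous_const)
    have hcBdd : ∀ x : ℝ, ‖c x‖ ≤ C * (volume (Set.Ioc (0:ℝ) s)).toReal := by
      intro x
      simp only [hcDef]
      refine norm_setIntegral_le_of_norm_le_const measure_Ioc_lt_top (fun r _ => ?_)
      · rw [norm_mul, norm_exp_I_mul x ((s : ℂ) - (r : ℂ)) (by simp), one_mul]
        exact haBdd r
    have hI1 : Integrable (fun x : ℝ => (starRingEnd ℂ) (g (α * x)) *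
        (Complex.exp (Complex.I * x * s) * (fLp α : ℝ → ℂ) x)) volume :=
      integrable_conj_mul hG2 (memLp_exp_mul hFLp s)
    have hI2 : Integrable (fun x : ℝ =>
        c x * ((starRingEnd ℂ) (g (α * x)) * g (α * x))) volume :=
      hGG.bdd_mul hcCont.aestronglyMeasurable (Filter.Eventually.of_forall hcBdd)
    have hI2' : Integrable (fun x : ℝ => Complex.I * lam *
        (c x * ((starRingEnd ℂ) (g (α * x)) * g (α * x)))) volume := hI2.const_mul _
    have step1 : a s = ∫ x : ℝ, ((starRingEnd ℂ) (g (α * x)) *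
        (Complex.exp (Complex.I * x * s) * (fLp α : ℝ → ℂ) x)
        + Complex.I * lam * (c x * ((starRingEnd ℂ) (g (α * x)) * g (α * x)))) := by
      simp only [haDef]
      refine integral_congr_ae ?_
      filter_upwards [hduh] with x hx
      rw [hx]
      have h1 : (∫ r in (0:ℝ)..s, Complex.exp (Complex.I * x * (s - r)) * g (α * x) *
          ∫ y : ℝ, (starRingEnd ℂ) (g (α * y)) * (P α r (fLp α) : ℝ → ℂ) y)
          = g (α * x) * c x := by
        simp only [hcDef]
        rw [← intervalIntegral.integral_of_le hs, ← intervalIntegral.integral_const_mul]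
        refine intervalIntegral.integral_congr fun r _ => ?_
        simp only [haDef]
        ring
      rw [h1]
      ring
    have step3 : (∫ x : ℝ, (starRingEnd ℂ) (g (α * x)) *
        (Complex.exp (Complex.I * x * s) * (fLp α : ℝ → ℂ) x)) = b s := by
      simp only [hbDef]
      refine integral_congr_ae ?_
      filter_upwards [hfLp α ⟨hα0, hα1⟩] with x hx
      rw [hx]
    have hFub : Integrable (Function.uncurry fun (x r : ℝ) =>
        Complex.exp (Complex.I * x * (s - r)) * a r *
          ((starRingEnd ℂ) (g (α * x)) * g (α * x)))
        ((volume : Measure ℝ).prod (volume.restrict (Set.Ioc (0:ℝ) s))) := by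
      have hmeas : AEStronglyMeasurable (Function.uncurry fun (x r : ℝ) =>
          Complex.exp (Complex.I * x * (s - r)) * a r *
            ((starRingEnd ℂ) (g (α * x)) * g (α * x)))
          ((volume : Measure ℝ).prod (volume.restrict (Set.Ioc (0:ℝ) s))) := by
        refine AEStronglyMeasurable.mul (AEStronglyMeasurable.mul ?_ haR.comp_snd) hGG.1.comp_fst
        refine (Complex.continuous_exp.comp ?_).aestronglyMeasurable
        exact (continuous_const.mul (Complex.continuous_ofReal.comp continuous_fst)).mul
          (continuous_const.sub (Complex.continuous_ofReal.comp continuous_snd))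
      have hconst : IntegrableOn (fun _ : ℝ => C) (Set.Ioc (0:ℝ) s) volume :=
        (integrableOn_const_iff).mpr (Or.inr measure_Ioc_lt_top)
      refine Integrable.mono' (Integrable.mul_prod hGG.norm hconst) hmeas ?_
      refine Filter.Eventually.of_forall fun p => ?_
      rcases p with ⟨x, r⟩
      simp only [Function.uncurry]
      rw [norm_mul, norm_mul, norm_exp_I_mul x ((s : ℂ) - (r : ℂ)) (by simp), one_mul,
        mul_comm]
      exact mul_le_mul_of_nonneg_left (haBdd r) (norm_nonneg _)
    have step4 : (∫ x : ℝ, c x * ((starRingEnd ℂ) (g (α * x)) * g (α * x)))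
        = ∫ r in (0:ℝ)..s, φ (s - r) * a r := by
      have e1 : (∫ x : ℝ, c x * ((starRingEnd ℂ) (g (α * x)) * g (α * x)))
          = ∫ x : ℝ, ∫ r in Set.Ioc (0:ℝ) s,
              Complex.exp (Complex.I * x * (s - r)) * a r *
                ((starRingEnd ℂ) (g (α * x)) * g (α * x)) := by
        refine integral_congr_ae (Filter.Eventually.of_forall fun x => ?_)
        simp only [hcDef]
        exact (integral_mul_const _ _).symm
      rw [e1, integral_integral_swap hFub, ← intervalIntegral.integral_of_le hs]
      refine intervalIntegral.integral_congr fun r hr => ?_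
      have e2 : (∫ x : ℝ, Complex.exp (Complex.I * x * (s - r)) * a r *
          ((starRingEnd ℂ) (g (α * x)) * g (α * x)))
          = (∫ x : ℝ, (starRingEnd ℂ) (g (α * x)) *
              (Complex.exp (Complex.I * x * (s - r)) * g (α * x))) * a r := by
        rw [← integral_mul_const]
        refine integral_congr_ae (Filter.Eventually.of_forall fun x => ?_)
        ring
      rw [e2]
      congr 1
      simp only [hφDef]
      norm_cast
    have step2 : a s = (∫ x : ℝ, (starRingEnd ℂ) (g (α * x)) *
          (Complex.exp (Complex.I * x * s) * (fLp α : ℝ → ℂ) x))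
        + Complex.I * lam * ∫ x : ℝ,
            c x * ((starRingEnd ℂ) (g (α * x)) * g (α * x)) := by
      rw [step1, integral_add hI1 hI2', integral_const_mul]
    rw [step2, step3, step4]
  -- final assembly
  have hbIntI : IntervalIntegrable b volume 0 t := hbCont.intervalIntegrable 0 t
  have haIntI : IntervalIntegrable a volume 0 t := by
    refine ContinuousOn.intervalIntegrable (haCont.mono ?_)
    rw [Set.uIcc_of_le ht]
    exact fun x hx => hx.1
  set X : ℝ → ℂ := fun s => Complex.I * lam * ∫ r in (0:ℝ)..s, φ (s - r) * a r with hXDef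
  have hXInt : IntervalIntegrable X volume 0 t := by
    rw [intervalIntegrable_iff_integrableOn_Ioc_of_le ht]
    have h2 := haIntI.sub hbIntI
    rw [intervalIntegrable_iff_integrableOn_Ioc_of_le ht] at h2
    refine h2.congr ?_
    refine (ae_restrict_iff' measurableSet_Ioc).mpr (Filter.Eventually.of_forall fun s hs => ?_)
    simp only [hXDef]
    rw [key s hs.1.le]
    ring
  have h1 : (∫ s in (0:ℝ)..t, a s) = ∫ s in (0:ℝ)..t, (b s + X s) := by
    refine intervalIntegral.integral_congr fun s hs => ?_
    rw [Set.uIcc_of_le ht] at hs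
    simp only [hXDef]
    exact key s hs.1
  have h3 : (∫ s in (0:ℝ)..t, (b s + X s))
      = (∫ s in (0:ℝ)..t, b s) + ∫ s in (0:ℝ)..t, X s :=
    intervalIntegral.integral_add hbIntI hXInt
  have h4 : (∫ s in (0:ℝ)..t, X s)
      = Complex.I * lam * ∫ s in (0:ℝ)..t, ∫ r in (0:ℝ)..s, φ (s - r) * a r := by
    simp only [hXDef]
    exact intervalIntegral.integral_const_mul _ _
  have h5 : (∫ s in (0:ℝ)..t, ∫ r in (0:ℝ)..s, φ (s - r) * a r)
      = ∫ s in (0:ℝ)..t, (∫ r in (0:ℝ)..(t - s), φ r) * a s := by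
    haveI : IsFiniteMeasure (volume.restrict (Set.Ioc (0:ℝ) t)) :=
      ⟨by rw [Measure.restrict_apply_univ]; exact measure_Ioc_lt_top⟩
    have haR2 : AEStronglyMeasurable a (volume.restrict (Set.Ioc (0:ℝ) t)) :=
      haMeas.mono_measure (Measure.restrict_mono (Set.Ioc_subset_Icc_self.trans Set.Icc_subset_Ici_self) le_rfl)
    rw [intervalIntegral.integral_of_le ht, intervalIntegral.integral_of_le ht]
    have hi : Set.EqOn (fun s : ℝ => ∫ r in (0:ℝ)..s, φ (s - r) * a r)
        (fun s : ℝ => ∫ r in Set.Ioc (0:ℝ) t,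
          Set.indicator (Set.Iic s) (fun r => φ (s - r) * a r) r) (Set.Ioc (0:ℝ) t) := by
      intro s hs
      simp only
      rw [intervalIntegral.integral_of_le hs.1.le,
        setIntegral_indicator measurableSet_Iic, Set.Ioc_inter_Iic, inf_eq_right.mpr hs.2]
    rw [setIntegral_congr_fun measurableSet_Ioc hi]
    have hK : Integrable (Function.uncurry fun (s r : ℝ) =>
        Set.indicator (Set.Iic s) (fun r' => φ (s - r') * a r') r)
        ((volume.restrict (Set.Ioc (0:ℝ) t)).prod (volume.restrict (Set.Ioc (0:ℝ) t))) := by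
      have hEq : (Function.uncurry fun (s r : ℝ) =>
          Set.indicator (Set.Iic s) (fun r' => φ (s - r') * a r') r)
          = Set.indicator {p : ℝ × ℝ | p.2 ≤ p.1} (fun p => φ (p.1 - p.2) * a p.2) := by
        funext p
        rcases p with ⟨s, r⟩
        simp only [Function.uncurry, Set.indicator_apply, Set.mem_Iic, Set.mem_setOf_eq]
      rw [hEq]
      have hmeasS : MeasurableSet {p : ℝ × ℝ | p.2 ≤ p.1} :=
        measurableSet_le measurable_snd measurable_fst
      have haesm : AEStronglyMeasurable (fun p : ℝ × ℝ => φ (p.1 - p.2) * a p.2)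
          ((volume.restrict (Set.Ioc (0:ℝ) t)).prod (volume.restrict (Set.Ioc (0:ℝ) t))) :=
        ((hφCont.comp (continuous_fst.sub continuous_snd)).aestronglyMeasurable).mul haR2.comp_snd
      refine Integrable.mono' (integrable_const (M * C)) (haesm.indicator hmeasS)
        (Filter.Eventually.of_forall fun p => ?_)
      refine (norm_indicator_le_norm_self _ _).trans ?_
      rw [norm_mul]
      exact mul_le_mul (hφBdd _) (haBdd _) (norm_nonneg _) hMnn
    rw [integral_integral_swap hK]
    refine setIntegral_congr_fun measurableSet_Ioc fun r hr => ?_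
    have hind : ∀ s : ℝ, Set.indicator (Set.Iic s) (fun r' => φ (s - r') * a r') r
        = Set.indicator (Set.Ici r) (fun s' => φ (s' - r) * a r) s := by
      intro s
      simp only [Set.indicator_apply, Set.mem_Iic, Set.mem_Ici]
    simp_rw [hind]
    rw [setIntegral_indicator measurableSet_Ici]
    have hset : Set.Ioc (0:ℝ) t ∩ Set.Ici r = Set.Icc r t := by
      ext y
      simp only [Set.mem_inter_iff, Set.mem_Ioc, Set.mem_Ici, Set.mem_Icc]
      constructor
      · rintro ⟨⟨_, hyt⟩, hry⟩; exact ⟨hry, hyt⟩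
      · rintro ⟨hry, hyt⟩; exact ⟨⟨lt_of_lt_of_le hr.1 hry, hyt⟩, hry⟩
    rw [hset, integral_Icc_eq_integral_Ioc, ← intervalIntegral.integral_of_le hr.2,
      intervalIntegral.integral_mul_const,
      intervalIntegral.integral_comp_sub_right (fun u => φ u) r, sub_self]
  have main : (∫ s in (0:ℝ)..t, a s)
      = (∫ s in (0:ℝ)..t, b s) + Complex.I * lam *
          ∫ s in (0:ℝ)..t, (∫ r in (0:ℝ)..(t - s), φ r) * a s := by
    rw [h1, h3, h4, h5]
  simp only [haDef, hbDef, hφDef] at main ⊢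
  exact main
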